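/- Every element of the form α(e₁e₂e₃e₊ - 1) + β(e₁e₂ + e₃e₊) with (α, β) ∈ R² (equivalently, every point on the line through n₁ and n₂ in the kinematic image space) is a non-invertible element of CGA, except when α = β = 0. -/

import Mathlib

open CliffordAlgebra Polynomial

noncomputable section

/-- The quadratic form of signature (4,1) on ℝ⁵. -/
def Qf : QuadraticForm ℝ (Fin 5 → ℝ) := QuadraticMap.weightedSumSquares ℝ ![1,1,1,1,-1]

/-- Conformal geometric algebra of ℝ^{4,1}. -/
abbrev CGA := CliffordAlgebra Qf

/-- The orthonormal generators e₁, e₂, e₃, e₊, e₋ (indices 0,1,2,3,4). -/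
def e (a : Fin 5) : CGA := ι Qf (Pi.single a 1)

/-! ### Auxiliary generator relations -/

lemma Qf_single (a : Fin 5) : Qf (Pi.single a 1) = ![1,1,1,1,-1] a := by
  rw [Qf, QuadraticMap.weightedSumSquares_apply]
  rw [Finset.sum_eq_single a]
  · fin_cases a <;> norm_num
  · intro i _ hi; simp [Pi.single_apply, hi]
  · simp

lemma e_sq (a : Fin 5) : e a * e a = algebraMap ℝ CGA (![1,1,1,1,-1] a) := by
  rw [e, ι_sq_scalar, Qf_single]

lemma e_swap (a b : Fin 5) (h : a ≠ b) : e a * e b = -(e b * e a) := by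
  have hth := CliffordAlgebra.ι_mul_ι_add_swap (Q := Qf) (Pi.single a 1) (Pi.single b 1)
  have hp : QuadraticMap.polar Qf (Pi.single a 1) (Pi.single b 1) = 0 := by
    rw [QuadraticMap.polar, Qf]
    simp only [QuadraticMap.weightedSumSquares_apply]
    rw [← Finset.sum_sub_distrib, ← Finset.sum_sub_distrib, Finset.sum_eq_zero]
    intro i _
    rcases eq_or_ne i a with rfl|ha <;> rcases eq_or_ne i b with rfl|hb <;>
      simp_all [Pi.single_apply]
  rw [hp, map_zero] at hth
  rw [e, e]
  linear_combination (norm := noncomm_ring) hth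

lemma e0_sq : e 0 * e 0 = 1 := by rw [e_sq]; norm_num
lemma e1_sq : e 1 * e 1 = 1 := by rw [e_sq]; norm_num
lemma e2_sq : e 2 * e 2 = 1 := by rw [e_sq]; simp [Matrix.cons_val]
lemma e3_sq : e 3 * e 3 = 1 := by rw [e_sq]; simp [Matrix.cons_val]
lemma e0_sq' (x : CGA) : e 0 * (e 0 * x) = x := by rw [← mul_assoc, e0_sq, one_mul]
lemma e1_sq' (x : CGA) : e 1 * (e 1 * x) = x := by rw [← mul_assoc, e1_sq, one_mul]
lemma e2_sq' (x : CGA) : e 2 * (e 2 * x) = x := by rw [← mul_assoc, e2_sq, one_mul]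
lemma e3_sq' (x : CGA) : e 3 * (e 3 * x) = x := by rw [← mul_assoc, e3_sq, one_mul]

lemma s10 : e 1 * e 0 = -(e 0 * e 1) := e_swap 1 0 (by decide)
lemma s20 : e 2 * e 0 = -(e 0 * e 2) := e_swap 2 0 (by decide)
lemma s21 : e 2 * e 1 = -(e 1 * e 2) := e_swap 2 1 (by decide)
lemma s30 : e 3 * e 0 = -(e 0 * e 3) := e_swap 3 0 (by decide)
lemma s31 : e 3 * e 1 = -(e 1 * e 3) := e_swap 3 1 (by decide)
lemma s32 : e 3 * e 2 = -(e 2 * e 3) := e_swap 3 2 (by decide)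
lemma s10' (x : CGA) : e 1 * (e 0 * x) = -(e 0 * (e 1 * x)) := by
  rw [← mul_assoc, s10, neg_mul, mul_assoc]
lemma s20' (x : CGA) : e 2 * (e 0 * x) = -(e 0 * (e 2 * x)) := by
  rw [← mul_assoc, s20, neg_mul, mul_assoc]
lemma s21' (x : CGA) : e 2 * (e 1 * x) = -(e 1 * (e 2 * x)) := by
  rw [← mul_assoc, s21, neg_mul, mul_assoc]
lemma s30' (x : CGA) : e 3 * (e 0 * x) = -(e 0 * (e 3 * x)) := by
  rw [← mul_assoc, s30, neg_mul, mul_assoc]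
lemma s31' (x : CGA) : e 3 * (e 1 * x) = -(e 1 * (e 3 * x)) := by
  rw [← mul_assoc, s31, neg_mul, mul_assoc]
lemma s32' (x : CGA) : e 3 * (e 2 * x) = -(e 2 * (e 3 * x)) := by
  rw [← mul_assoc, s32, neg_mul, mul_assoc]

lemma key1 : (e 0 * e 1 * e 2 * e 3 - 1) * (e 0 * e 1 * e 2 * e 3 + 1) = 0 := by
  simp only [sub_mul, one_mul, mul_add, mul_one, mul_assoc]
  simp [s10', s20', s21', s30', s31', s32', s10, s20, s21, s30, s31, s32,
    e0_sq, e1_sq, e2_sq, e3_sq, e0_sq', e1_sq', e2_sq', e3_sq', mul_assoc]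

lemma key2 : (e 0 * e 1 + e 2 * e 3) * (e 0 * e 1 * e 2 * e 3 + 1) = 0 := by
  simp only [add_mul, mul_add, mul_one, mul_assoc]
  simp [s10', s20', s21', s30', s31', s32', s10, s20, s21, s30, s31, s32,
    e0_sq, e1_sq, e2_sq, e3_sq, e0_sq', e1_sq', e2_sq', e3_sq', mul_assoc]

/-! ### A matrix representation, used to show `e 0 * e 1 * e 2 * e 3 + 1 ≠ 0` -/

abbrev M4 := Matrix (Fin 4) (Fin 4) ℂ

open Complex in
def gam : Fin 5 → M4 :=
  ![!![0,0,1,0; 0,0,0,1; 1,0,0,0; 0,1,0,0],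
    !![0,0,-I,0; 0,0,0,-I; I,0,0,0; 0,I,0,0],
    !![0,1,0,0; 1,0,0,0; 0,0,0,-1; 0,0,-1,0],
    !![0,-I,0,0; I,0,0,0; 0,0,0,I; 0,0,-I,0],
    !![I,0,0,0; 0,-I,0,0; 0,0,-I,0; 0,0,0,I]]

def fe : (Fin 5 → ℝ) →ₗ[ℝ] M4 where
  toFun v := ∑ a, v a • gam a
  map_add' u v := by simp [add_smul, Finset.sum_add_distrib]
  map_smul' c v := by simp [mul_smul, Finset.smul_sum]

lemma fe_apply (v : Fin 5 → ℝ) : fe v = ∑ a, v a • gam a := rfl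

set_option maxHeartbeats 1000000 in
lemma hfe (v : Fin 5 → ℝ) : fe v * fe v = algebraMap ℝ M4 (Qf v) := by
  have hq : Qf v = v 0 * v 0 + v 1 * v 1 + v 2 * v 2 + v 3 * v 3 - v 4 * v 4 := by
    rw [Qf, QuadraticMap.weightedSumSquares_apply, Fin.sum_univ_five]
    norm_num; simp [Matrix.cons_val]; ring
  rw [hq, fe_apply, Fin.sum_univ_five]
  simp only [gam, Matrix.cons_val_zero, Matrix.cons_val_one, Matrix.head_cons,
    Matrix.cons_val_two, Matrix.tail_cons, Matrix.cons_val_three, Matrix.cons_val_four]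
  ext i j
  fin_cases i <;> fin_cases j <;>
    simp only [Matrix.add_apply, Matrix.smul_apply, Matrix.mul_apply, Fin.sum_univ_four,
      Matrix.cons_val_zero, Matrix.cons_val_one, Matrix.head_cons, Matrix.cons_val_two,
      Matrix.tail_cons, Matrix.cons_val_three, Matrix.cons_val', Matrix.head_fin_const,
      Matrix.empty_val', Matrix.cons_val_fin_one, Matrix.algebraMap_matrix_apply,
      Complex.real_smul, smul_eq_mul] <;>
    norm_num [Complex.ext_iff, Matrix.vecHead, Matrix.vecTail] <;> ring_nf <;>
    simp [Complex.I_sq, Complex.ext_iff, Matrix.vecHead, Matrix.vecTail]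

/-- The representation of CGA on 4×4 complex matrices. -/
def rep : CGA →ₐ[ℝ] M4 := CliffordAlgebra.lift Qf ⟨fe, hfe⟩

lemma rep_e (a : Fin 5) : rep (e a) = gam a := by
  rw [rep, e, CliffordAlgebra.lift_ι_apply, fe_apply, Fin.sum_univ_five]
  fin_cases a <;> simp [Pi.single_apply]

lemma Pplus_ne_zero : e 0 * e 1 * e 2 * e 3 + 1 ≠ 0 := by
  intro hc
  have h2 : rep (e 0 * e 1 * e 2 * e 3 + 1) = 0 := by rw [hc, map_zero]
  rw [map_add, map_one, map_mul, map_mul, map_mul] at h2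
  simp only [rep_e] at h2
  have h3 := congrFun (congrFun (congrArg (fun m : M4 => (m : Matrix (Fin 4) (Fin 4) ℂ)) h2) 1) 1
  simp [gam, Matrix.mul_apply, Fin.sum_univ_four, Matrix.one_apply] at h3

/-- every non-zero real combination α(e₁e₂e₃e₊ - 1) + β(e₁e₂ + e₃e₊),
i.e. every point on the line through n₁ and n₂, is non-invertible in CGA. -/
theorem secant_points_not_invertible (α β : ℝ) (h : ¬ (α = 0 ∧ β = 0)) :
    ¬ IsUnit (α • (e 0 * e 1 * e 2 * e 3 - 1) + β • (e 0 * e 1 + e 2 * e 3)) := by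
  intro hu
  have hz : (α • (e 0 * e 1 * e 2 * e 3 - 1) + β • (e 0 * e 1 + e 2 * e 3)) *
      (e 0 * e 1 * e 2 * e 3 + 1) = 0 := by
    rw [add_mul, smul_mul_assoc, smul_mul_assoc, key1, key2, smul_zero, smul_zero, add_zero]
  exact Pplus_ne_zero ((IsUnit.mul_right_eq_zero hu).mp hz)
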